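/- The set A(T) of attractive points of T is a closed and convex subset of H. -/

import Mathlib

theorem attractive_points_closed_convex
    {H : Type*} [NormedAddCommGroup H] [InnerProductSpace ℝ H]
    (C : Set H) (hC : C.Nonempty) (T : H → H) :
    IsClosed {z : H | ∀ x ∈ C, ‖T x - z‖ ≤ ‖x - z‖} ∧
    Convex ℝ {z : H | ∀ x ∈ C, ‖T x - z‖ ≤ ‖x - z‖} := by
  constructor
  · have : {z : H | ∀ x ∈ C, ‖T x - z‖ ≤ ‖x - z‖} =
        ⋂ x ∈ C, {z : H | ‖T x - z‖ ≤ ‖x - z‖} := by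
      ext z; simp [Set.mem_iInter]
    rw [this]
    refine isClosed_biInter fun x _ => ?_
    exact isClosed_le (by fun_prop) (by fun_prop)
  · intro z1 hz1 z2 hz2 a b ha hb hab x hx
    have h1 := hz1 x hx
    have h2 := hz2 x hx
    have sq1 : ‖T x - z1‖ ^ 2 ≤ ‖x - z1‖ ^ 2 := by
      nlinarith [norm_nonneg (T x - z1), norm_nonneg (x - z1)]
    have sq2 : ‖T x - z2‖ ^ 2 ≤ ‖x - z2‖ ^ 2 := by
      nlinarith [norm_nonneg (T x - z2), norm_nonneg (x - z2)]
    set w := a • z1 + b • z2 with hw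
    have key : ‖T x - w‖ ^ 2 ≤ ‖x - w‖ ^ 2 := by
      have e : ∀ u v : H, ‖u - v‖ ^ 2 = ‖u‖ ^ 2 - 2 * inner ℝ u v + ‖v‖ ^ 2 := fun u v =>
        norm_sub_sq_real u v
      rw [e, e]
      have iTw : (inner ℝ (T x) w : ℝ) = a * inner ℝ (T x) z1 + b * inner ℝ (T x) z2 := by
        simp [hw, inner_add_right, inner_smul_right]
      have ixw : (inner ℝ x w : ℝ) = a * inner ℝ x z1 + b * inner ℝ x z2 := by
        simp [hw, inner_add_right, inner_smul_right]
      rw [iTw, ixw]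
      rw [e, e] at sq1 sq2
      nlinarith [mul_le_mul_of_nonneg_left sq1 ha, mul_le_mul_of_nonneg_left sq2 hb]
    nlinarith [norm_nonneg (T x - w), norm_nonneg (x - w), key]
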